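/- Let ℒ be the generator of an irreducible continuous-time Markov chain on a finite set V with stationary measure π, and let μ ∈ 𝒫(V). If H : V → ℝ is such that μ is stationary for the tilted chain with rates R_H(x,y) = R(x,y)e^{H(y)−H(x)}, then the Donsker–Varadhan functional satisfies ℐ(μ) ≥ 𝒥_H(μ) with equality, where 𝒥_H(μ) = Σ_{x,y} μ(x)R(x,y)(1 − e^{H(y)−H(x)}). (Statement: stationarity of μ for ℒ_H implies ℐ(μ) = 𝒥_H(μ).) -/
import Mathlib


/-- `𝒥_H(μ) = ∑_{x,y} μ(x) R(x,y) (1 − e^{H(y)−H(x)})`. -/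
noncomputable def DVJ {V : Type*} [Fintype V]
    (R : V → V → ℝ) (H : V → ℝ) (μ : V → ℝ) : ℝ :=
  ∑ x, ∑ y, μ x * R x y * (1 - Real.exp (H y - H x))

/-- Donsker–Varadhan rate functional `ℐ(μ) = sup_H 𝒥_H(μ)`. -/
noncomputable def DV {V : Type*} [Fintype V] (R : V → V → ℝ) (μ : V → ℝ) : ℝ :=
  ⨆ H : V → ℝ, DVJ R H μ

theorem stmt_17 {V : Type*} [Fintype V] [Nonempty V]
    (R : V → V → ℝ) (hR : ∀ x y, 0 ≤ R x y)
    (hirr : ∀ x y : V, Relation.ReflTransGen (fun a b => 0 < R a b) x y)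
    (μ : V → ℝ) (hμ0 : ∀ x, 0 ≤ μ x) (hμ1 : ∑ x, μ x = 1)
    (H : V → ℝ)
    -- μ is stationary for the chain tilted by H, with rates
    -- `R_H(x,y) = R(x,y) e^{H(y)−H(x)}`
    (hstat : ∀ g : V → ℝ,
      ∑ x, μ x * ∑ y, R x y * Real.exp (H y - H x) * (g y - g x) = 0) :
    DV R μ = DVJ R H μ := by
  have key : ∀ G : V → ℝ, DVJ R G μ ≤ DVJ R H μ := by
    intro G
    have hdiff : DVJ R H μ - DVJ R G μ
        = ∑ x, ∑ y, μ x * R x y * (Real.exp (G y - G x) - Real.exp (H y - H x)) := by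
      unfold DVJ
      rw [← Finset.sum_sub_distrib]
      refine Finset.sum_congr rfl fun x _ => ?_
      rw [← Finset.sum_sub_distrib]
      refine Finset.sum_congr rfl fun y _ => ?_
      ring
    have h1 : (0:ℝ) ≤ ∑ x, ∑ y, μ x * R x y * (Real.exp (G y - G x) - Real.exp (H y - H x)) := by
      calc (0:ℝ)
          = ∑ x, μ x * ∑ y, R x y * Real.exp (H y - H x) * ((G y - H y) - (G x - H x)) :=
            (hstat (fun z => G z - H z)).symm
        _ = ∑ x, ∑ y, μ x * (R x y * Real.exp (H y - H x) * ((G y - H y) - (G x - H x))) := by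
            simp [Finset.mul_sum]
        _ ≤ ∑ x, ∑ y, μ x * R x y * (Real.exp (G y - G x) - Real.exp (H y - H x)) := by
            refine Finset.sum_le_sum fun x _ => Finset.sum_le_sum fun y _ => ?_
            have hexp : Real.exp (H y - H x) * Real.exp ((G y - H y) - (G x - H x))
                = Real.exp (G y - G x) := by
              rw [← Real.exp_add]; ring_nf
            have h2 : (G y - H y) - (G x - H x) + 1 ≤ Real.exp ((G y - H y) - (G x - H x)) :=
              Real.add_one_le_exp _
            have hnn : 0 ≤ μ x * (R x y * Real.exp (H y - H x)) :=
              mul_nonneg (hμ0 x) (mul_nonneg (hR x y) (Real.exp_pos _).le)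
            have h3 := mul_le_mul_of_nonneg_left
              (show (G y - H y) - (G x - H x) ≤ Real.exp ((G y - H y) - (G x - H x)) - 1
                by linarith) hnn
            rw [← hexp]
            nlinarith [h3]
    linarith
  have hbdd : BddAbove (Set.range fun G : V → ℝ => DVJ R G μ) :=
    ⟨DVJ R H μ, by rintro _ ⟨G, rfl⟩; exact key G⟩
  exact le_antisymm (ciSup_le key) (le_ciSup hbdd H)
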